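/- Let B, A ∈ ℝ[s] with n = deg B ≥ deg A + 2 and fix k_P ≠ 0 and L > 0. Then along any sequence of singular frequencies ω_k → ∞ (solutions of ω k_P = −|B(jω)/A(jω)| sin(ωL + φ(ω)) with φ(ω) = arg(B(jω)/A(jω))), one has sin(ω_k L + φ(ω_k)) → 0, and hence the distances from ω_k to the set {kπ/L : k ∈ ℕ} ∪ {(k+1/2)π/L : k ∈ ℕ} tend to 0 (according to whether φ(ω) → 0, π or ±π/2). -/

import Mathlib

set_option maxHeartbeats 1000000

open Polynomial Filter

noncomputable def Complex.abs : AbsoluteValue ℂ ℝ :=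
  IsAbsoluteValue.toAbsoluteValue (norm : ℂ → ℝ)

lemma Complex.abs_I : Complex.abs Complex.I = 1 := Complex.norm_I

lemma Complex.abs_ofReal (r : ℝ) : Complex.abs (r : ℂ) = |r| := Complex.norm_real r

lemma Complex.norm_eq_abs (z : ℂ) : ‖z‖ = Complex.abs z := rfl

lemma Complex.continuous_abs : Continuous Complex.abs := continuous_norm

lemma aux_absxI (x : ℝ) (hx : 0 ≤ x) (i : ℕ) :
    Complex.abs (((x : ℂ) * Complex.I) ^ i) = x ^ i := by
  rw [map_pow, map_mul, Complex.abs_I, Complex.abs_ofReal, abs_of_nonneg hx, mul_one]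

lemma aux_tail (P : Polynomial ℝ) (x : ℝ) (hx : 1 ≤ x) :
    Complex.abs ((Polynomial.aeval ((x : ℂ) * Complex.I)) P
        - (P.coeff P.natDegree : ℂ) * ((x : ℂ) * Complex.I) ^ P.natDegree)
      ≤ (∑ i ∈ Finset.range P.natDegree, |P.coeff i|) * x ^ (P.natDegree - 1) := by
  have hx0 : (0:ℝ) ≤ x := le_trans zero_le_one hx
  have hsum : (Polynomial.aeval ((x : ℂ) * Complex.I)) P
      = ∑ i ∈ Finset.range (P.natDegree + 1), (P.coeff i : ℂ) * ((x : ℂ) * Complex.I) ^ i := by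
    rw [Polynomial.aeval_eq_sum_range]
    simp [Complex.real_smul]
  rw [hsum, Finset.sum_range_succ, add_sub_cancel_right]
  refine le_trans (Complex.abs.sum_le _ _) ?_
  calc ∑ i ∈ Finset.range P.natDegree, Complex.abs ((P.coeff i : ℂ) * ((x : ℂ) * Complex.I) ^ i)
      ≤ ∑ i ∈ Finset.range P.natDegree, |P.coeff i| * x ^ (P.natDegree - 1) := by
        refine Finset.sum_le_sum fun i hi => ?_
        rw [map_mul, aux_absxI x hx0, Complex.abs_ofReal]
        refine mul_le_mul_of_nonneg_left ?_ (abs_nonneg _)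
        exact pow_le_pow_right₀ hx (by have := Finset.mem_range.mp hi; omega)
    _ = _ := by rw [← Finset.sum_mul]

lemma aux_round (x : ℝ) :
    |x - round (x / Real.pi) * Real.pi| ≤ Real.pi / 2 * |Real.sin x| := by
  have hπ := Real.pi_pos
  set q : ℤ := round (x / Real.pi) with hq
  have key : (x / Real.pi - q) * Real.pi = x - q * Real.pi := by field_simp
  have h1 : |x - q * Real.pi| ≤ Real.pi / 2 := by
    rw [← key, abs_mul, abs_of_pos hπ]
    have h := abs_sub_round (x / Real.pi)
    nlinarith
  have h2 : |Real.sin (x - q * Real.pi)| = |Real.sin x| := by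
    rw [Real.sin_sub_int_mul_pi, abs_mul]
    rcases Int.even_or_odd q with h | h
    · simp [h.neg_one_zpow]
    · simp [h.neg_one_zpow]
  have h3 := Real.mul_abs_le_abs_sin (x := x - q * Real.pi) h1
  rw [h2] at h3
  have h5 := mul_le_mul_of_nonneg_left h3 (le_of_lt (half_pos hπ))
  have h6 : Real.pi / 2 * (2 / Real.pi * |x - q * Real.pi|) = |x - q * Real.pi| := by
    field_simp
  linarith

lemma aux_ratio (P : Polynomial ℝ) (hP : P ≠ 0) :
    Tendsto (fun x : ℝ => (Polynomial.aeval ((x : ℂ) * Complex.I)) P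
        / ((P.coeff P.natDegree : ℂ) * ((x : ℂ) * Complex.I) ^ P.natDegree))
      atTop (nhds 1) := by
  have hc : P.coeff P.natDegree ≠ 0 := Polynomial.leadingCoeff_ne_zero.mpr hP
  have hc' : (P.coeff P.natDegree : ℂ) ≠ 0 := by exact_mod_cast hc
  rcases Nat.eq_zero_or_pos P.natDegree with hp0 | hp1
  · have heq : ∀ x : ℝ, (Polynomial.aeval ((x : ℂ) * Complex.I)) P
        / ((P.coeff P.natDegree : ℂ) * ((x : ℂ) * Complex.I) ^ P.natDegree) = 1 := by
      intro x
      obtain ⟨a, rfl⟩ := Polynomial.natDegree_eq_zero.mp hp0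
      rw [Polynomial.natDegree_C, pow_zero, mul_one, Polynomial.aeval_C]
      simp only [Polynomial.natDegree_C, Polynomial.coeff_C_zero] at hc'
      rw [Polynomial.coeff_C_zero]
      exact div_self hc'
    simp only [heq]
    exact tendsto_const_nhds
  · set p := P.natDegree with hpdef
    set S := ∑ i ∈ Finset.range p, |P.coeff i| with hSdef
    rw [tendsto_iff_norm_sub_tendsto_zero]
    apply squeeze_zero' (t₀ := atTop) (g := fun x => (S / |P.coeff p|) / x)
      (Eventually.of_forall fun x => norm_nonneg _) ?_ ?_
    · filter_upwards [eventually_ge_atTop (1:ℝ)] with x hx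
      have hx0 : (0:ℝ) < x := lt_of_lt_of_le one_pos hx
      have hD : ((P.coeff p : ℂ) * ((x : ℂ) * Complex.I) ^ p) ≠ 0 := by
        apply mul_ne_zero hc'
        apply pow_ne_zero
        apply mul_ne_zero _ Complex.I_ne_zero
        exact_mod_cast hx0.ne'
      rw [div_sub_one hD]
      rw [norm_div]
      have hDabs : ‖(P.coeff p : ℂ) * ((x : ℂ) * Complex.I) ^ p‖ = |P.coeff p| * x ^ p := by
        rw [Complex.norm_eq_abs, map_mul, Complex.abs_ofReal]
        congr 1
        rw [map_pow, map_mul, Complex.abs_I, Complex.abs_ofReal, abs_of_pos hx0, mul_one]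
      rw [hDabs]
      have hnum : ‖(Polynomial.aeval ((x : ℂ) * Complex.I)) P
          - (P.coeff p : ℂ) * ((x : ℂ) * Complex.I) ^ p‖ ≤ S * x ^ (p - 1) := by
        rw [Complex.norm_eq_abs]
        exact aux_tail P x hx
      have hden : (0:ℝ) < |P.coeff p| * x ^ p := by positivity
      have hxp : x ^ p = x ^ (p - 1) * x := by
        conv_lhs => rw [show p = (p-1)+1 from by omega]
        rw [pow_succ]
      calc ‖(Polynomial.aeval ((x : ℂ) * Complex.I)) P
            - (P.coeff p : ℂ) * ((x : ℂ) * Complex.I) ^ p‖ / (|P.coeff p| * x ^ p)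
          ≤ (S * x ^ (p - 1)) / (|P.coeff p| * x ^ p) := by gcongr
        _ = (S / |P.coeff p|) / x := by
            rw [hxp]
            have h1 : |P.coeff p| ≠ 0 := abs_ne_zero.mpr hc
            have h2 : x ^ (p-1) ≠ 0 := by positivity
            field_simp
    · exact Tendsto.div_atTop tendsto_const_nhds tendsto_id

/-- High-frequency behavior of singular frequencies for time-delay loops:
along any sequence of singular frequencies `ω_k → ∞` (for fixed `k_P ≠ 0`),
`sin(ω_k L + φ(ω_k)) → 0`, and the distance from `ω_k` to the set
`{kπ/L : k ∈ ℕ} ∪ {(k+1/2)π/L : k ∈ ℕ}` tends to `0`. -/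
theorem singular_frequencies_high_frequency (A B : Polynomial ℝ) (L kP : ℝ)
    (hL : 0 < L) (hkP : kP ≠ 0) (hA : A ≠ 0) (hB : B ≠ 0)
    (hnm : A.natDegree + 2 ≤ B.natDegree)
    (ω : ℕ → ℝ) (hpos : ∀ k, 0 < ω k)
    (hAne : ∀ k, Polynomial.aeval ((ω k : ℂ) * Complex.I) A ≠ 0)
    (htop : Tendsto ω atTop atTop)
    (hsing : ∀ k, ω k * kP
        = -(‖Polynomial.aeval ((ω k : ℂ) * Complex.I) B
              / Polynomial.aeval ((ω k : ℂ) * Complex.I) A‖)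
          * Real.sin (ω k * L
              + Complex.arg (Polynomial.aeval ((ω k : ℂ) * Complex.I) B
                  / Polynomial.aeval ((ω k : ℂ) * Complex.I) A))) :
    Tendsto (fun k => Real.sin (ω k * L
        + Complex.arg (Polynomial.aeval ((ω k : ℂ) * Complex.I) B
            / Polynomial.aeval ((ω k : ℂ) * Complex.I) A))) atTop (nhds 0) ∧
    Tendsto (fun k => Metric.infDist (ω k)
        ({x : ℝ | ∃ n : ℕ, x = n * Real.pi / L} ∪
         {x : ℝ | ∃ n : ℕ, x = (n + 1/2) * Real.pi / L})) atTop (nhds 0) := by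
  have hπ := Real.pi_pos
  set z : ℕ → ℂ := fun k =>
    Polynomial.aeval ((ω k : ℂ) * Complex.I) B / Polynomial.aeval ((ω k : ℂ) * Complex.I) A
    with hzdef
  have hsing' : ∀ k, ω k * kP
      = -(Complex.abs (z k)) * Real.sin (ω k * L + Complex.arg (z k)) := by
    intro k; simp only [hzdef]; exact hsing k
  -- basic notation
  set n := B.natDegree with hndef
  set m := A.natDegree with hmdef
  have hbn : B.coeff n ≠ 0 := Polynomial.leadingCoeff_ne_zero.mpr hB
  have ham : A.coeff m ≠ 0 := Polynomial.leadingCoeff_ne_zero.mpr hA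
  have hbn' : (0:ℝ) < |B.coeff n| := abs_pos.mpr hbn
  set SB := ∑ i ∈ Finset.range n, |B.coeff i| with hSBdef
  set SA := ∑ i ∈ Finset.range m, |A.coeff i| with hSAdef
  have hSB0 : 0 ≤ SB := Finset.sum_nonneg fun i _ => abs_nonneg _
  have hSA0 : 0 ≤ SA := Finset.sum_nonneg fun i _ => abs_nonneg _
  set T := SA + |A.coeff m| with hTdef
  have hT0 : 0 < T := add_pos_of_nonneg_of_pos hSA0 (abs_pos.mpr ham)
  -- positivity of |z k|
  have hfpos : ∀ k, 0 < Complex.abs (z k) := by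
    intro k
    rcases (Complex.abs.nonneg (z k)).eq_or_lt with h | h
    · exfalso
      have h0 := hsing' k
      rw [← h, neg_zero, zero_mul] at h0
      exact (mul_ne_zero (hpos k).ne' hkP) h0
    · exact h
  have hzne : ∀ k, z k ≠ 0 := fun k => by
    intro h0
    have := hfpos k
    rw [h0, map_zero] at this
    exact lt_irrefl _ this
  -- the sine identity
  have hsin : ∀ k, Real.sin (ω k * L + Complex.arg (z k))
      = -(ω k * kP) / Complex.abs (z k) := by
    intro k
    have h0 := hsing' k
    have hf0 : Complex.abs (z k) ≠ 0 := (hfpos k).ne'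
    field_simp
    linarith [h0]
  -- upper bound for |A(iω)|
  have habsA : ∀ x : ℝ, 1 ≤ x →
      Complex.abs ((Polynomial.aeval ((x : ℂ) * Complex.I)) A) ≤ T * x ^ m := by
    intro x hx
    have hx0 : (0:ℝ) ≤ x := le_trans zero_le_one hx
    have h1 := aux_tail A x hx
    have h2 : Complex.abs ((A.coeff m : ℂ) * ((x : ℂ) * Complex.I) ^ m)
        = |A.coeff m| * x ^ m := by
      rw [map_mul, aux_absxI x hx0, Complex.abs_ofReal]
    have h3 : Complex.abs ((Polynomial.aeval ((x : ℂ) * Complex.I)) A)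
        ≤ Complex.abs ((Polynomial.aeval ((x : ℂ) * Complex.I)) A
            - (A.coeff m : ℂ) * ((x : ℂ) * Complex.I) ^ m)
          + Complex.abs ((A.coeff m : ℂ) * ((x : ℂ) * Complex.I) ^ m) := by
      have := Complex.abs.add_le ((Polynomial.aeval ((x : ℂ) * Complex.I)) A
          - (A.coeff m : ℂ) * ((x : ℂ) * Complex.I) ^ m)
          ((A.coeff m : ℂ) * ((x : ℂ) * Complex.I) ^ m)
      simpa using this
    have h4 : x ^ (m - 1) ≤ x ^ m := pow_le_pow_right₀ hx (by omega)
    have h5 : SA * x ^ (m-1) ≤ SA * x ^ m := mul_le_mul_of_nonneg_left h4 hSA0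
    rw [h2] at h3
    rw [hTdef]
    nlinarith
  -- lower bound for |B(iω)|
  have habsB : ∀ x : ℝ, 1 ≤ x →
      |B.coeff n| * x ^ n - SB * x ^ (n - 1)
        ≤ Complex.abs ((Polynomial.aeval ((x : ℂ) * Complex.I)) B) := by
    intro x hx
    have hx0 : (0:ℝ) ≤ x := le_trans zero_le_one hx
    have h1 := aux_tail B x hx
    have h2 : Complex.abs ((B.coeff n : ℂ) * ((x : ℂ) * Complex.I) ^ n)
        = |B.coeff n| * x ^ n := by
      rw [map_mul, aux_absxI x hx0, Complex.abs_ofReal]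
    have h3 : Complex.abs ((B.coeff n : ℂ) * ((x : ℂ) * Complex.I) ^ n)
        ≤ Complex.abs ((Polynomial.aeval ((x : ℂ) * Complex.I)) B)
          + Complex.abs ((Polynomial.aeval ((x : ℂ) * Complex.I)) B
            - (B.coeff n : ℂ) * ((x : ℂ) * Complex.I) ^ n) := by
      have := Complex.abs.add_le ((B.coeff n : ℂ) * ((x : ℂ) * Complex.I) ^ n
          - (Polynomial.aeval ((x : ℂ) * Complex.I)) B)
          ((Polynomial.aeval ((x : ℂ) * Complex.I)) B)
      rw [sub_add_cancel] at this
      rw [← Complex.abs.map_sub ((Polynomial.aeval ((x : ℂ) * Complex.I)) B)] at this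
      linarith [this]
    rw [h2] at h3
    linarith
  -- eventual bound on |sin|
  set C := 2 * T * |kP| / |B.coeff n| with hCdef
  have hbound : ∀ᶠ k in atTop,
      |Real.sin (ω k * L + Complex.arg (z k))| ≤ C / ω k := by
    filter_upwards [htop.eventually_ge_atTop (max 1 (2 * SB / |B.coeff n|))] with k hk
    have hx1 : 1 ≤ ω k := le_trans (le_max_left _ _) hk
    have hx0 : (0:ℝ) < ω k := hpos k
    have hx2 : 2 * SB / |B.coeff n| ≤ ω k := le_trans (le_max_right _ _) hk
    have hB1 : |B.coeff n| / 2 * ω k ^ n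
        ≤ Complex.abs ((Polynomial.aeval ((ω k : ℂ) * Complex.I)) B) := by
      have h2 : SB * ω k ^ (n-1) ≤ |B.coeff n| / 2 * ω k ^ n := by
        have hxx : 2 * SB ≤ |B.coeff n| * ω k := by
          rw [div_le_iff₀ hbn'] at hx2
          linarith
        have hpow : ω k ^ n = ω k ^ (n-1) * ω k := by
          conv_lhs => rw [show n = (n-1)+1 from by omega]
          rw [pow_succ]
        rw [hpow]
        have hxp : (0:ℝ) ≤ ω k ^ (n-1) := by positivity
        nlinarith
      linarith [habsB (ω k) hx1]
    have hA1 := habsA (ω k) hx1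
    have hA0 : 0 < Complex.abs ((Polynomial.aeval ((ω k : ℂ) * Complex.I)) A) :=
      Complex.abs.pos (hAne k)
    have hflow : |B.coeff n| / (2 * T) * ω k ^ 2 ≤ Complex.abs (z k) := by
      have h1 : (|B.coeff n| / 2 * ω k ^ n) / (T * ω k ^ m) ≤ Complex.abs (z k) := by
        rw [hzdef]
        simp only
        rw [map_div₀]
        exact div_le_div₀ (Complex.abs.nonneg _) hB1 (by positivity) hA1
      have hxe : (|B.coeff n| / 2 * ω k ^ n) / (T * ω k ^ m)
          = |B.coeff n| / (2 * T) * ω k ^ (n - m) := by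
        have hxn : ω k ^ n = ω k ^ m * ω k ^ (n - m) :=
          (pow_mul_pow_sub (ω k) (by omega)).symm
        rw [hxn]
        have : ω k ^ m ≠ 0 := by positivity
        field_simp
      rw [hxe] at h1
      have hx2n : ω k ^ 2 ≤ ω k ^ (n - m) := pow_le_pow_right₀ hx1 (by omega)
      have : |B.coeff n| / (2*T) * ω k ^ 2 ≤ |B.coeff n| / (2*T) * ω k ^ (n-m) := by
        apply mul_le_mul_of_nonneg_left hx2n
        positivity
      linarith
    have habssin : |Real.sin (ω k * L + Complex.arg (z k))|
        = ω k * |kP| / Complex.abs (z k) := by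
      rw [hsin k, abs_div, abs_neg, abs_mul, abs_of_pos hx0,
        abs_of_pos (hfpos k)]
    rw [habssin]
    have hD : (0:ℝ) < |B.coeff n| / (2 * T) * ω k ^ 2 := by positivity
    have h2 : ω k * |kP| / Complex.abs (z k)
        ≤ ω k * |kP| / (|B.coeff n| / (2 * T) * ω k ^ 2) := by
      gcongr
    have heq : ω k * |kP| / (|B.coeff n| / (2 * T) * ω k ^ 2) = C / ω k := by
      rw [hCdef]
      field_simp
    rw [heq] at h2
    exact h2
  have key1abs : Tendsto (fun k => |Real.sin (ω k * L + Complex.arg (z k))|)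
      atTop (nhds 0) :=
    squeeze_zero' (Eventually.of_forall fun k => abs_nonneg _) hbound
      (Tendsto.div_atTop tendsto_const_nhds htop)
  have key1 : Tendsto (fun k => Real.sin (ω k * L + Complex.arg (z k)))
      atTop (nhds 0) := (tendsto_zero_iff_abs_tendsto_zero _).mpr key1abs
  refine ⟨by simpa only [hzdef] using key1, ?_⟩
  -- Part 2
  obtain ⟨d, hd2, hdn⟩ : ∃ d, 2 ≤ d ∧ n = m + d := ⟨n - m, by omega, by omega⟩
  set u : ℕ → ℂ := fun k =>
    ((Polynomial.aeval ((ω k : ℂ) * Complex.I)) B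
        / ((B.coeff n : ℂ) * ((ω k : ℂ) * Complex.I) ^ n)) /
    ((Polynomial.aeval ((ω k : ℂ) * Complex.I)) A
        / ((A.coeff m : ℂ) * ((ω k : ℂ) * Complex.I) ^ m)) with hudef
  have hut : Tendsto u atTop (nhds 1) := by
    have h1 := (aux_ratio B hB).comp htop
    have h2 := (aux_ratio A hA).comp htop
    have h3 := h1.div h2 one_ne_zero
    have h4 : (1:ℂ) / 1 = 1 := by norm_num
    rw [h4] at h3
    rw [hudef]
    exact h3
  have hωC : ∀ k, ((ω k : ℂ)) ≠ 0 := fun k => by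
    exact_mod_cast (hpos k).ne'
  have hxI : ∀ k, ((ω k : ℂ) * Complex.I) ≠ 0 :=
    fun k => mul_ne_zero (hωC k) Complex.I_ne_zero
  have hbnC : (B.coeff n : ℂ) ≠ 0 := by exact_mod_cast hbn
  have hamC : (A.coeff m : ℂ) ≠ 0 := by exact_mod_cast ham
  have hzw : ∀ k, z k
      = u k * ((B.coeff n : ℂ) / (A.coeff m : ℂ) * ((ω k : ℂ) * Complex.I) ^ d) := by
    intro k
    rw [hzdef, hudef]
    simp only
    have h1 := hAne k
    have h2 := hxI k
    have hw : (B.coeff n : ℂ) / (A.coeff m : ℂ) * ((ω k : ℂ) * Complex.I) ^ d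
        = ((B.coeff n : ℂ) * ((ω k : ℂ) * Complex.I) ^ n)
          / ((A.coeff m : ℂ) * ((ω k : ℂ) * Complex.I) ^ m) := by
      rw [hdn, pow_add]
      field_simp
    rw [div_div_div_comm, hw,
      div_mul_cancel₀ _ (div_ne_zero (mul_ne_zero hbnC (pow_ne_zero _ h2))
        (mul_ne_zero hamC (pow_ne_zero _ h2)))]
  set r : ℕ → ℝ := fun k => (B.coeff n / A.coeff m) ^ 2 * (-1 : ℝ) ^ d * ω k ^ (2 * d)
    with hrdef
  have hrne : ∀ k, r k ≠ 0 := by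
    intro k
    rw [hrdef]
    simp only
    have h1 : B.coeff n / A.coeff m ≠ 0 := div_ne_zero hbn ham
    exact mul_ne_zero (mul_ne_zero (pow_ne_zero _ h1)
      (pow_ne_zero _ (by norm_num))) (pow_ne_zero _ (hpos k).ne')
  have hzr : ∀ k, z k ^ 2 = ((r k : ℝ) : ℂ) * u k ^ 2 := by
    intro k
    rw [hzw k, hrdef]
    simp only
    push_cast
    have hI : (Complex.I) ^ (2 * d) = ((-1 : ℂ)) ^ d := by
      rw [pow_mul, Complex.I_sq]
    calc (u k * ((B.coeff n : ℂ) / (A.coeff m : ℂ) * ((ω k : ℂ) * Complex.I) ^ d)) ^ 2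
        = ((B.coeff n : ℂ) / (A.coeff m : ℂ)) ^ 2 * ((ω k : ℂ)) ^ (2 * d)
            * (Complex.I) ^ (2 * d) * u k ^ 2 := by ring
      _ = _ := by rw [hI]; ring
  have hs2 : ∀ k, |Real.sin (2 * Complex.arg (z k))|
      = |(u k ^ 2).im| / Complex.abs (u k) ^ 2 := by
    intro k
    have hz0 := hzne k
    have h1 : Real.sin (2 * Complex.arg (z k)) = (z k ^ 2).im / Complex.abs (z k) ^ 2 := by
      rw [Real.sin_two_mul, Complex.sin_arg, Complex.cos_arg hz0, sq (z k), Complex.mul_im]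
      have hf0 : Complex.abs (z k) ≠ 0 := (hfpos k).ne'
      field_simp
      rw [Complex.norm_eq_abs]
      ring
    have h2 : Complex.abs (z k) ^ 2 = |r k| * Complex.abs (u k) ^ 2 := by
      rw [← map_pow, hzr k, map_mul, Complex.abs_ofReal, map_pow]
    have h3 : (z k ^ 2).im = r k * (u k ^ 2).im := by
      rw [hzr k, Complex.im_ofReal_mul]
    rw [h1, h3, h2, abs_div, abs_mul (r k),
      abs_of_nonneg (show (0:ℝ) ≤ |r k| * Complex.abs (u k) ^ 2 by positivity),
      mul_div_mul_left _ _ (abs_ne_zero.mpr (hrne k))]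
  have hcont : ContinuousAt (fun v : ℂ => |(v ^ 2).im| / Complex.abs v ^ 2) 1 := by
    apply ContinuousAt.div
    · exact ((Complex.continuous_im.comp (continuous_pow 2)).abs).continuousAt
    · exact (Complex.continuous_abs.pow 2).continuousAt
    · simp
  have hs2t : Tendsto (fun k => |Real.sin (2 * Complex.arg (z k))|) atTop (nhds 0) := by
    have h0 := hcont.tendsto.comp hut
    have h1 : Tendsto (fun k => |(u k ^ 2).im| / Complex.abs (u k) ^ 2) atTop (nhds 0) := by
      simpa [Function.comp_def] using h0
    exact h1.congr fun k => (hs2 k).symm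
  -- rounding
  set a : ℕ → ℤ := fun k => round ((ω k * L + Complex.arg (z k)) / Real.pi) with hadef
  set b : ℕ → ℤ := fun k => round ((2 * Complex.arg (z k)) / Real.pi) with hbdef
  set δ : ℕ → ℝ := fun k =>
    (ω k * L + Complex.arg (z k) - a k * Real.pi)
      - (2 * Complex.arg (z k) - b k * Real.pi) / 2 with hδdef
  have hε1 : Tendsto (fun k => ω k * L + Complex.arg (z k) - a k * Real.pi)
      atTop (nhds 0) := by
    rw [tendsto_zero_iff_abs_tendsto_zero]
    refine squeeze_zero (fun k => abs_nonneg _)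
      (fun k => by simpa only [hadef, Function.comp_apply] using aux_round (ω k * L + Complex.arg (z k))) ?_
    have := key1abs.const_mul (Real.pi / 2)
    simpa using this
  have hε2 : Tendsto (fun k => 2 * Complex.arg (z k) - b k * Real.pi) atTop (nhds 0) := by
    rw [tendsto_zero_iff_abs_tendsto_zero]
    refine squeeze_zero (fun k => abs_nonneg _)
      (fun k => by simpa only [hbdef, Function.comp_apply] using aux_round (2 * Complex.arg (z k))) ?_
    have := hs2t.const_mul (Real.pi / 2)
    simpa using this
  have hδt : Tendsto δ atTop (nhds 0) := by
    have h0 := hε1.sub (hε2.div_const 2)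
    have h1 : (0:ℝ) - 0 / 2 = 0 := by norm_num
    rw [h1] at h0
    rw [hδdef]
    exact h0
  have hωeq : ∀ k, ω k * L = ((2 * a k - b k : ℤ) : ℝ) * (Real.pi / 2) + δ k := by
    intro k
    simp only [hδdef]
    push_cast
    ring
  have hdista : ∀ k, ω k - ((2 * a k - b k : ℤ) : ℝ) * Real.pi / (2 * L) = δ k / L := by
    intro k
    have h := hωeq k
    rw [eq_div_iff hL.ne', sub_mul]
    have h2 : ((2 * a k - b k : ℤ) : ℝ) * Real.pi / (2 * L) * L
        = ((2 * a k - b k : ℤ) : ℝ) * (Real.pi / 2) := by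
      field_simp
    rw [h2]
    linarith
  have hjpos : ∀ᶠ k in atTop, 0 ≤ 2 * a k - b k := by
    have h1 : ∀ᶠ k in atTop, |δ k| < 1 / 2 := by
      have := hδt.eventually (eventually_abs_sub_lt 0 (by norm_num : (0:ℝ) < 1/2))
      simpa using this
    filter_upwards [htop.eventually_ge_atTop (1 / L), h1] with k hk1 hk2
    have hωL : 1 ≤ ω k * L := by
      rw [div_le_iff₀ hL] at hk1
      linarith
    have h := hωeq k
    have habs := abs_lt.mp hk2
    have hc2 : (0:ℝ) < ((2 * a k - b k : ℤ) : ℝ) * (Real.pi / 2) := by linarith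
    have hcpos : (0:ℝ) < ((2 * a k - b k : ℤ) : ℝ) := by
      by_contra hcon
      push_neg at hcon
      nlinarith
    exact_mod_cast hcpos.le
  have hmem : ∀ j : ℕ, ((j : ℝ) * Real.pi / (2 * L)) ∈
      ({x : ℝ | ∃ n : ℕ, x = n * Real.pi / L} ∪
       {x : ℝ | ∃ n : ℕ, x = (n + 1/2) * Real.pi / L}) := by
    intro j
    rcases Nat.even_or_odd j with ⟨q, hq⟩ | ⟨q, hq⟩
    · left
      refine ⟨q, ?_⟩
      subst hq
      push_cast
      rw [div_eq_div_iff (by positivity : (2*L) ≠ 0) hL.ne']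
      ring
    · right
      refine ⟨q, ?_⟩
      subst hq
      push_cast
      rw [div_eq_div_iff (by positivity : (2*L) ≠ 0) hL.ne']
      ring
  refine squeeze_zero' (g := fun k => |δ k| / L)
    (Eventually.of_forall fun k => Metric.infDist_nonneg) ?_ ?_
  · filter_upwards [hjpos] with k hk
    have hmem' := hmem (2 * a k - b k).toNat
    have hcast : (((2 * a k - b k).toNat : ℕ) : ℝ) = ((2 * a k - b k : ℤ) : ℝ) := by
      exact_mod_cast Int.toNat_of_nonneg hk
    rw [hcast] at hmem'
    calc Metric.infDist (ω k) _
        ≤ dist (ω k) (((2 * a k - b k : ℤ) : ℝ) * Real.pi / (2 * L)) :=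
          Metric.infDist_le_dist_of_mem hmem'
      _ = |δ k| / L := by
          rw [Real.dist_eq, hdista k, abs_div, abs_of_pos hL]
  · have := (hδt.abs).div_const L
    simpa using this
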